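/- Under the closed-form solution d*(x) = (1/Z) d_ref(x) exp(r(x)/β), the reward can be recovered as r(x) = β log(d*(x)/d_ref(x)) + β log Z, where Z is a constant independent of x. -/

import Mathlib

theorem reward_recovery {X : Type*} [Fintype X]
    (dref : X → ℝ) (hpos : ∀ x, 0 < dref x)
    (r : X → ℝ) (β : ℝ) (hβ : 0 < β)
    (Z : ℝ) (hZ : Z = ∑ x, dref x * Real.exp (r x / β))
    (dstar : X → ℝ) (hdstar : ∀ x, dstar x = dref x * Real.exp (r x / β) / Z) :
    ∀ x, r x = β * Real.log (dstar x / dref x) + β * Real.log Z := by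
  intro x
  have hZpos : 0 < Z := by
    rw [hZ]
    exact Finset.sum_pos (fun y _ => mul_pos (hpos y) (Real.exp_pos _))
      ⟨x, Finset.mem_univ x⟩
  have h : dstar x / dref x = Real.exp (r x / β) / Z := by
    rw [hdstar x, div_div, mul_comm Z (dref x), ← div_div,
      mul_div_cancel_left₀ _ (ne_of_gt (hpos x))]
  rw [h, Real.log_div (by positivity) (ne_of_gt hZpos), Real.log_exp]
  field_simp
  ring
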